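/- In the a posteriori setting with the continuous inf-sup condition for b with constant β > 0: ‖p − p_h‖_M ≤ C(‖R₀p − p_h‖_M + ‖E_h φ_h − Π_h(E_h φ_h)‖_Q + ‖Ru − u_h‖_W + ‖φ_h − R̄φ‖_h). -/

import Mathlib

open RealInnerProductSpace

/-- Theorem 2.8: a posteriori bound for the pressure, using the continuous
inf-sup condition for `b` with constant `β > 0`, the error equation (2.28a),
the bound `‖Ru − u‖ ≤ C_E ‖y − y_h‖` and the Theorem 2.6 bound on
`‖y − y_h‖_Q`. -/
theorem stmt15 {V M W Q : Type*}
    [NormedAddCommGroup V] [NormedSpace ℝ V]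
    [NormedAddCommGroup M] [NormedSpace ℝ M]
    [NormedAddCommGroup W] [InnerProductSpace ℝ W]
    [NormedAddCommGroup Q] [InnerProductSpace ℝ Q]
    (Xs : Submodule ℝ V)
    (a : V →ₗ[ℝ] V →ₗ[ℝ] ℝ) (b : V →ₗ[ℝ] M →ₗ[ℝ] ℝ)
    (E : V →ₗ[ℝ] Q) (ιW : V →ₗ[ℝ] W)
    (Qh : Submodule ℝ Q) [Qh.HasOrthogonalProjection]
    (beta C1 CE Cy : ℝ)
    (hbeta : 0 < beta) (hCE : 0 < CE) (hCy : 0 < Cy)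
    (u Ru φ Rφ uh φh : V) (p R0p ph : M) (y yh : Q)
    (hu : u ∈ Xs) (hRu : Ru ∈ Xs)
    -- continuity of a
    (hconta : ∀ v z : V, |a v z| ≤ C1 * ‖v‖ * ‖z‖)
    -- Assumption II
    (hII : ∀ v : V, ‖E v‖ ≤ ‖v‖)
    -- continuous inf-sup condition for b with constant beta
    (hinfsup : ∀ q : M,
      beta * ‖q‖ ≤ ⨆ z : {z : V // z ∈ Xs ∧ z ≠ 0}, b z.1 q / ‖z.1‖)
    -- error equation (2.28a)
    (h10 : ∀ z ∈ Xs, a (u - Ru) z + b z (p - R0p) = ⟪y - yh, E z⟫)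
    -- reconstruction bound (2.33)
    (hRubound : ‖Ru - u‖ ≤ CE * ‖y - yh‖)
    -- Theorem 2.6 bound on the control error
    (hybound : ‖y - yh‖ ≤ Cy * (‖E φh - (Qh.orthogonalProjectionOnto (E φh) : Q)‖
        + ‖φh - Rφ‖ + ‖ιW (Ru - uh)‖)) :
    ∃ C > 0, ‖p - ph‖ ≤ C * (‖R0p - ph‖
        + ‖E φh - (Qh.orthogonalProjectionOnto (E φh) : Q)‖
        + ‖ιW (Ru - uh)‖ + ‖φh - Rφ‖) := by

  set K := |C1| * CE + 1 with hKdef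
  have hK : 0 < K := by positivity
  have hy0 : (0:ℝ) ≤ ‖y - yh‖ := norm_nonneg _
  -- Step 1: beta * ‖p - R0p‖ ≤ K * ‖y - yh‖
  have step1 : beta * ‖p - R0p‖ ≤ K * ‖y - yh‖ := by
    refine (hinfsup (p - R0p)).trans ?_
    refine Real.iSup_le (fun z => ?_) (by positivity)
    obtain ⟨z, hz, hz0⟩ := z
    have hzpos : (0:ℝ) < ‖z‖ := norm_pos_iff.mpr hz0
    rw [div_le_iff₀ hzpos]
    have heq : b z (p - R0p) = ⟪y - yh, E z⟫ - a (u - Ru) z := by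
      have := h10 z hz; linarith
    have h1 : ⟪y - yh, E z⟫ ≤ ‖y - yh‖ * ‖z‖ :=
      (real_inner_le_norm _ _).trans
        (mul_le_mul_of_nonneg_left (hII z) hy0)
    have h2 : -a (u - Ru) z ≤ |C1| * CE * ‖y - yh‖ * ‖z‖ := by
      have habs : |a (u - Ru) z| ≤ |C1| * ‖u - Ru‖ * ‖z‖ := by
        refine (hconta (u - Ru) z).trans ?_
        have := mul_le_mul_of_nonneg_right (mul_le_mul_of_nonneg_right
          (le_abs_self C1) (norm_nonneg (u - Ru))) (norm_nonneg z)
        linarith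
      have hur : ‖u - Ru‖ ≤ CE * ‖y - yh‖ := by
        rw [norm_sub_rev]; exact hRubound
      have h3 := mul_le_mul_of_nonneg_right
        (mul_le_mul_of_nonneg_left hur (abs_nonneg C1)) (norm_nonneg z)
      have := neg_abs_le (a (u - Ru) z)
      linarith
    calc b z (p - R0p) = ⟪y - yh, E z⟫ + (-a (u - Ru) z) := by rw [heq]; ring
      _ ≤ ‖y - yh‖ * ‖z‖ + |C1| * CE * ‖y - yh‖ * ‖z‖ := add_le_add h1 h2
      _ = K * ‖y - yh‖ * ‖z‖ := by ring
  refine ⟨K * Cy / beta + 1, by positivity, ?_⟩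
  have hpR : ‖p - R0p‖ ≤ (K * Cy / beta) * (‖E φh - (Qh.orthogonalProjectionOnto (E φh) : Q)‖
      + ‖ιW (Ru - uh)‖ + ‖φh - Rφ‖) := by
    rw [div_mul_eq_mul_div, le_div_iff₀ hbeta]
    calc ‖p - R0p‖ * beta = beta * ‖p - R0p‖ := by ring
      _ ≤ K * ‖y - yh‖ := step1
      _ ≤ K * Cy * (‖E φh - (Qh.orthogonalProjectionOnto (E φh) : Q)‖
          + ‖ιW (Ru - uh)‖ + ‖φh - Rφ‖) := by
        have := mul_le_mul_of_nonneg_left hybound (le_of_lt hK)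
        nlinarith
  have htri : ‖p - ph‖ ≤ ‖p - R0p‖ + ‖R0p - ph‖ := by
    have := norm_add_le (p - R0p) (R0p - ph)
    simpa [sub_add_sub_cancel] using this
  have h1 : (0:ℝ) ≤ ‖R0p - ph‖ := norm_nonneg _
  have h2 : (0:ℝ) ≤ ‖E φh - (Qh.orthogonalProjectionOnto (E φh) : Q)‖ := norm_nonneg _
  have h3 : (0:ℝ) ≤ ‖ιW (Ru - uh)‖ := norm_nonneg _
  have h4 : (0:ℝ) ≤ ‖φh - Rφ‖ := norm_nonneg _
  have hKCy : (0:ℝ) ≤ K * Cy / beta := by positivity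
  nlinarith
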